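/- arXiv:1504.02887 — 2 statements merged into one kernel-verified Lean document; each statement's English description precedes it below -/
import Mathlib

section
/- Let d ≥ 1 and n ≥ 1 be integers and let C : ℝ^d → ℝ be d times continuously differentiable on an open set containing [0,1]^d. Then for every m = (m_1,…,m_d) ∈ ℝ^d, the d-fold mixed partial derivative ∂^d/∂m_1⋯∂m_d of the map m ↦ C(Φ(m_1),…,Φ(m_d))^n equals (∏_{j=1}^d φ(m_j)) · ∑_{j=1}^{min(d,n)} [ (n!/(n−j)!) · C(Φ(m_1),…,Φ(m_d))^{n−j} · ∑_{𝒫∈𝒮_{d,j}} ∏_{M∈𝒫} ∂_M C(Φ(m_1),…,Φ(m_d)) ]. (This is the joint density of the vector of componentwise block-maxima on the marginally standard-normal scale.) -/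
open scoped Classical

noncomputable section

/-- Partial derivative of `f : ℝ^d → ℝ` with respect to the `i`-th coordinate. -/
def coordPartial {d : ℕ} (i : Fin d) (f : (Fin d → ℝ) → ℝ) : (Fin d → ℝ) → ℝ :=
  fun x => deriv (fun t => f (Function.update x i t)) (x i)

/-- Mixed partial derivative `∂_M f`, taken once with respect to each coordinate in `M`
(in increasing order of the indices). -/
def mixedPartial {d : ℕ} (M : Finset (Fin d)) (f : (Fin d → ℝ) → ℝ) : (Fin d → ℝ) → ℝ :=
  (M.sort (· ≤ ·)).foldr coordPartial f

/-- The iterated mixed partial derivative `∂^k/∂u₁⋯∂u_k` with respect to the first `k`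
coordinates. -/
def iterPartial {d : ℕ} (k : ℕ) (f : (Fin d → ℝ) → ℝ) : (Fin d → ℝ) → ℝ :=
  ((List.finRange d).take k).foldr coordPartial f

/-- `𝒮_{s,j}`: the set of set-partitions of the ground set `s` into exactly `j` nonempty
blocks, encoded as finsets of pairwise disjoint nonempty blocks whose union is `s`. -/
def setPartitions {d : ℕ} (s : Finset (Fin d)) (j : ℕ) : Finset (Finset (Finset (Fin d))) :=
  Finset.univ.filter fun P =>
    (↑P : Set (Finset (Fin d))).PairwiseDisjoint id ∧
    (∀ M ∈ P, M.Nonempty) ∧ P.sup id = s ∧ P.card = j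

/-- The standard normal density `φ(x) = (2π)^{-1/2} exp(-x²/2)`. -/
def stdNormalPdf (x : ℝ) : ℝ :=
  (Real.sqrt (2 * Real.pi))⁻¹ * Real.exp (-x ^ 2 / 2)

/-- The standard normal cumulative distribution function `Φ`. -/
def stdNormalCdf (x : ℝ) : ℝ :=
  ∫ t in Set.Iic x, stdNormalPdf t


section Aux


lemma continuous_stdNormalPdf : Continuous stdNormalPdf := by
  unfold stdNormalPdf; fun_prop

lemma stdNormalPdf_nonneg (x : ℝ) : 0 ≤ stdNormalPdf x := by
  unfold stdNormalPdf
  positivity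

lemma integrable_stdNormalPdf : MeasureTheory.Integrable stdNormalPdf := by
  have h : stdNormalPdf = fun x => (Real.sqrt (2 * Real.pi))⁻¹ * Real.exp (-(1/2) * x ^ 2) := by
    funext x; unfold stdNormalPdf; ring_nf
  rw [h]
  exact (integrable_exp_neg_mul_sq (by norm_num : (0:ℝ) < 1/2)).const_mul _

lemma integral_stdNormalPdf : ∫ x, stdNormalPdf x = 1 := by
  have h : ∀ x : ℝ, stdNormalPdf x = (Real.sqrt (2 * Real.pi))⁻¹ * Real.exp (-(1/2) * x ^ 2) := by
    intro x; unfold stdNormalPdf; ring_nf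
  rw [show stdNormalPdf = fun x => (Real.sqrt (2 * Real.pi))⁻¹ * Real.exp (-(1/2) * x ^ 2) from funext h]
  rw [MeasureTheory.integral_const_mul, integral_gaussian]
  rw [show Real.pi / (1/2) = 2 * Real.pi by ring]
  rw [inv_mul_cancel₀]
  exact ne_of_gt (Real.sqrt_pos.mpr (by positivity))

lemma stdNormalCdf_mem_Icc (x : ℝ) : stdNormalCdf x ∈ Set.Icc (0:ℝ) 1 := by
  constructor
  · exact MeasureTheory.setIntegral_nonneg measurableSet_Iic (fun t _ => stdNormalPdf_nonneg t)
  · rw [← integral_stdNormalPdf]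
    exact MeasureTheory.setIntegral_le_integral integrable_stdNormalPdf
      (MeasureTheory.ae_of_all _ stdNormalPdf_nonneg)


lemma hasDerivAt_stdNormalCdf (x : ℝ) : HasDerivAt stdNormalCdf (stdNormalPdf x) x := by
  have heq : stdNormalCdf = fun y => stdNormalCdf 0 + ∫ t in (0:ℝ)..y, stdNormalPdf t := by
    funext y
    rw [← intervalIntegral.integral_Iic_sub_Iic integrable_stdNormalPdf.integrableOn
      integrable_stdNormalPdf.integrableOn]
    unfold stdNormalCdf; ring
  rw [heq]
  have h := intervalIntegral.integral_hasDerivAt_right (a := (0:ℝ))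
    (integrable_stdNormalPdf.intervalIntegrable)
    (continuous_stdNormalPdf.stronglyMeasurableAtFilter _ _)
    (continuous_stdNormalPdf.continuousAt (x := x))
  exact h.const_add _

def partsOf {d : ℕ} (S : Finset (Fin d)) : Finset (Finset (Finset (Fin d))) :=
  Finset.univ.filter fun P =>
    (↑P : Set (Finset (Fin d))).PairwiseDisjoint id ∧ (∀ M ∈ P, M.Nonempty) ∧ P.sup id = S

variable {d : ℕ}

lemma hasDerivAt_comp_update {g : (Fin d → ℝ) → ℝ} {u : Fin d → ℝ} {i : Fin d}
    (h : DifferentiableAt ℝ g u) :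
    HasDerivAt (fun s => g (Function.update u i s)) (fderiv ℝ g u (Pi.single i 1)) (u i) := by
  have h1 : HasDerivAt (Function.update u i) (Pi.single i (1:ℝ)) (u i) :=
    hasDerivAt_update u i (u i)
  have h2 : HasFDerivAt g (fderiv ℝ g u) (Function.update u i (u i)) := by
    rw [Function.update_eq_self]; exact h.hasFDerivAt
  exact h2.comp_hasDerivAt (u i) h1

lemma coordPartial_eq_fderiv {g : (Fin d → ℝ) → ℝ} {u : Fin d → ℝ} {i : Fin d}
    (h : DifferentiableAt ℝ g u) :
    coordPartial i g u = fderiv ℝ g u (Pi.single i 1) :=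
  (hasDerivAt_comp_update h).deriv

lemma coordPartial_contDiffOn {U : Set (Fin d → ℝ)} (hU : IsOpen U) {g : (Fin d → ℝ) → ℝ}
    {k : ℕ} (hg : ContDiffOn ℝ (k + 1 : ℕ) g U) (i : Fin d) :
    ContDiffOn ℝ (k : ℕ) (coordPartial i g) U := by
  have hdiff : ∀ x ∈ U, DifferentiableAt ℝ g x := fun x hx =>
    (hg.differentiableOn (by simp)).differentiableAt
      (hU.mem_nhds hx)
  have h1 : ContDiffOn ℝ (k : ℕ) (fderiv ℝ g) U :=
    hg.fderiv_of_isOpen hU (by exact_mod_cast le_refl (k+1))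
  have h2 : ContDiffOn ℝ (k : ℕ) (fun x => fderiv ℝ g x (Pi.single i 1)) U :=
    h1.clm_apply contDiffOn_const
  exact h2.congr fun x hx => coordPartial_eq_fderiv (hdiff x hx)

lemma foldr_coordPartial_contDiffOn {U : Set (Fin d → ℝ)} (hU : IsOpen U)
    {f : (Fin d → ℝ) → ℝ} {k : ℕ} (l : List (Fin d)) (hl : l.length ≤ k)
    (hf : ContDiffOn ℝ (k : ℕ) f U) :
    ContDiffOn ℝ ((k - l.length : ℕ)) (l.foldr coordPartial f) U := by
  induction l with
  | nil => simpa using hf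
  | cons a l ih =>
    have h1 : ContDiffOn ℝ ((k - l.length : ℕ)) (l.foldr coordPartial f) U :=
      ih (le_trans (Nat.le_succ _) hl)
    have he : k - l.length = (k - (a :: l).length) + 1 := by
      simp only [List.length_cons] at hl ⊢; omega
    rw [he] at h1
    exact coordPartial_contDiffOn hU h1 a

lemma mem_partsOf {S : Finset (Fin d)} {P : Finset (Finset (Fin d))} :
    P ∈ partsOf S ↔ (↑P : Set (Finset (Fin d))).PairwiseDisjoint id ∧
      (∀ M ∈ P, M.Nonempty) ∧ P.sup id = S := by
  simp [partsOf]

lemma block_subset {S : Finset (Fin d)} {P : Finset (Finset (Fin d))} {M : Finset (Fin d)}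
    (hP : P ∈ partsOf S) (hM : M ∈ P) : M ⊆ S := by
  rw [mem_partsOf] at hP
  exact hP.2.2 ▸ Finset.le_sup (f := id) hM

lemma partsOf_empty : partsOf (∅ : Finset (Fin d)) = {∅} := by
  ext P
  rw [mem_partsOf, Finset.mem_singleton]
  constructor
  · rintro ⟨-, hne, hsup⟩
    by_contra hne'
    obtain ⟨M, hM⟩ := Finset.nonempty_iff_ne_empty.mpr hne'
    obtain ⟨a, ha⟩ := hne M hM
    have : a ∈ P.sup id := Finset.le_sup (f := id) hM ha
    rw [hsup] at this
    exact absurd this (Finset.notMem_empty a)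
  · rintro rfl
    exact ⟨by simp, by simp, by simp⟩

lemma singleton_not_mem_parts {i : Fin d} {S : Finset (Fin d)} {P : Finset (Finset (Fin d))}
    (hi : i ∉ S) (hP : P ∈ partsOf S) : ({i} : Finset (Fin d)) ∉ P := fun h =>
  hi (block_subset hP h (Finset.mem_singleton_self i))

lemma insert_singleton_mem_partsOf {i : Fin d} {S : Finset (Fin d)} {P : Finset (Finset (Fin d))}
    (hi : i ∉ S) (hP : P ∈ partsOf S) :
    insert ({i} : Finset (Fin d)) P ∈ partsOf (insert i S) := by
  have hsub : ∀ M ∈ P, M ⊆ S := fun M hM => block_subset hP hM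
  rw [mem_partsOf] at hP ⊢
  obtain ⟨hdisj, hne, hsup⟩ := hP
  refine ⟨?_, ?_, ?_⟩
  · rw [Finset.coe_insert]
    refine hdisj.insert fun M hM _ => ?_
    simp only [id]
    exact Finset.disjoint_singleton_left.mpr fun hiM => hi (hsub M hM hiM)
  · intro M hM
    rcases Finset.mem_insert.mp hM with h | h
    · exact h ▸ Finset.singleton_nonempty i
    · exact hne M h
  · rw [Finset.sup_insert, hsup]
    exact (Finset.insert_eq i S).symm

lemma grow_mem_partsOf {i : Fin d} {S : Finset (Fin d)} {P : Finset (Finset (Fin d))}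
    {M : Finset (Fin d)} (hi : i ∉ S) (hP : P ∈ partsOf S) (hM : M ∈ P) :
    insert (insert i M) (P.erase M) ∈ partsOf (insert i S) := by
  have hsub : ∀ M' ∈ P, M' ⊆ S := fun M' hM' => block_subset hP hM'
  rw [mem_partsOf] at hP ⊢
  obtain ⟨hdisj, hne, hsup⟩ := hP
  refine ⟨?_, ?_, ?_⟩
  · rw [Finset.coe_insert]
    refine (hdisj.subset (Finset.coe_subset.mpr (Finset.erase_subset M P) : (↑(P.erase M) : Set (Finset (Fin d))) ⊆ (↑P : Set _))).insert
      fun M' hM' _ => ?_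
    have hM'P : M' ∈ P.erase M := hM'
    have hM'ne : M' ≠ M := (Finset.mem_erase.mp hM'P).1
    have hM'mem : M' ∈ P := (Finset.mem_erase.mp hM'P).2
    simp only [id]
    rw [Finset.disjoint_insert_left]
    exact ⟨fun hiM' => hi (hsub M' hM'mem hiM'),
      hdisj hM hM'mem (fun h => hM'ne h.symm)⟩
  · intro M' hM'
    rcases Finset.mem_insert.mp hM' with h | h
    · exact h ▸ Finset.insert_nonempty i M
    · exact hne M' (Finset.mem_erase.mp h).2
  · rw [Finset.sup_insert]
    have h2 : P.sup id = id M ⊔ (P.erase M).sup id := by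
      conv_lhs => rw [← Finset.insert_erase hM, Finset.sup_insert]
    rw [h2] at hsup
    simp only [id, Finset.sup_eq_union] at hsup ⊢
    rw [Finset.insert_union, hsup]

/-- The block of a partition containing `i`. -/
def blockOf {d : ℕ} (i : Fin d) (Q : Finset (Finset (Fin d))) : Finset (Fin d) :=
  (Q.filter fun M => i ∈ M).sup id

lemma blockOf_spec {i : Fin d} {S : Finset (Fin d)} {Q : Finset (Finset (Fin d))}
    (hQ : Q ∈ partsOf (insert i S)) :
    blockOf i Q ∈ Q ∧ i ∈ blockOf i Q ∧ ∀ M ∈ Q, i ∈ M → M = blockOf i Q := by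
  rw [mem_partsOf] at hQ
  obtain ⟨hdisj, hne, hsup⟩ := hQ
  have hiS : i ∈ Q.sup id := hsup ▸ Finset.mem_insert_self i S
  rw [Finset.mem_sup] at hiS
  obtain ⟨B, hB, hiB⟩ := hiS
  have hfilt : Q.filter (fun M => i ∈ M) = {B} := by
    ext M
    rw [Finset.mem_filter, Finset.mem_singleton]
    constructor
    · rintro ⟨hMQ, hiM⟩
      by_contra hMB
      exact Finset.disjoint_left.mp (hdisj hMQ hB hMB) hiM hiB
    · rintro rfl; exact ⟨hB, hiB⟩
  have hblk : blockOf i Q = B := by rw [blockOf, hfilt, Finset.sup_singleton]; rfl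
  rw [hblk]
  refine ⟨hB, hiB, fun M hM hiM => ?_⟩
  by_contra hMB
  exact Finset.disjoint_left.mp (hdisj hM hB hMB) hiM hiB

lemma not_mem_sup_erase {i : Fin d} {S : Finset (Fin d)} {Q : Finset (Finset (Fin d))}
    (hQ : Q ∈ partsOf (insert i S)) :
    i ∉ (Q.erase (blockOf i Q)).sup id := by
  intro h
  rw [Finset.mem_sup] at h
  obtain ⟨M, hM, hiM⟩ := h
  obtain ⟨hMne, hMQ⟩ := Finset.mem_erase.mp hM
  exact hMne ((blockOf_spec hQ).2.2 M hMQ hiM)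

lemma sup_erase_blockOf {i : Fin d} {S : Finset (Fin d)} {Q : Finset (Finset (Fin d))}
    (hi : i ∉ S) (hQ : Q ∈ partsOf (insert i S)) :
    (blockOf i Q).erase i ∪ (Q.erase (blockOf i Q)).sup id = S := by
  obtain ⟨hB, hiB, _⟩ := blockOf_spec hQ
  have hsup : Q.sup id = insert i S := (mem_partsOf.mp hQ).2.2
  have h2 : Q.sup id = blockOf i Q ∪ (Q.erase (blockOf i Q)).sup id := by
    conv_lhs => rw [← Finset.insert_erase hB, Finset.sup_insert]
    simp [id, Finset.sup_eq_union]
  rw [hsup] at h2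
  have hni := not_mem_sup_erase hQ
  ext a
  simp only [Finset.mem_union, Finset.mem_erase]
  constructor
  · rintro (⟨hai, haB⟩ | haE)
    · have : a ∈ insert i S := h2 ▸ Finset.mem_union_left _ haB
      exact (Finset.mem_insert.mp this).resolve_left hai
    · have : a ∈ insert i S := h2 ▸ Finset.mem_union_right _ haE
      rcases Finset.mem_insert.mp this with rfl | h
      · exact absurd haE hni
      · exact h
  · intro haS
    have hai : a ≠ i := fun h => hi (h ▸ haS)
    have : a ∈ blockOf i Q ∪ (Q.erase (blockOf i Q)).sup id := by
      rw [← h2]; exact Finset.mem_insert_of_mem haS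
    rcases Finset.mem_union.mp this with h | h
    · exact Or.inl ⟨hai, h⟩
    · exact Or.inr h

lemma erase_singleton_mem_partsOf {i : Fin d} {S : Finset (Fin d)} {Q : Finset (Finset (Fin d))}
    (hi : i ∉ S) (hQ : Q ∈ partsOf (insert i S)) (hiQ : ({i} : Finset (Fin d)) ∈ Q) :
    Q.erase {i} ∈ partsOf S := by
  have hblk : blockOf i Q = {i} :=
    ((blockOf_spec hQ).2.2 {i} hiQ (Finset.mem_singleton_self i)).symm
  have hsup := sup_erase_blockOf hi hQ
  rw [hblk] at hsup
  simp only [Finset.erase_singleton, Finset.empty_union] at hsup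
  rw [mem_partsOf] at hQ ⊢
  obtain ⟨hdisj, hne, -⟩ := hQ
  exact ⟨hdisj.subset (by simp [Finset.erase_subset]),
    fun M hM => hne M (Finset.mem_erase.mp hM).2, hsup⟩

lemma erase_blockOf_nonempty {i : Fin d} {S : Finset (Fin d)} {Q : Finset (Finset (Fin d))}
    (hQ : Q ∈ partsOf (insert i S)) (hiQ : ({i} : Finset (Fin d)) ∉ Q) :
    ((blockOf i Q).erase i).Nonempty := by
  obtain ⟨hB, hiB, -⟩ := blockOf_spec hQ
  rw [Finset.nonempty_iff_ne_empty]
  intro h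
  have : blockOf i Q = {i} := by
    apply Finset.eq_singleton_iff_unique_mem.mpr
    refine ⟨hiB, fun a ha => ?_⟩
    by_contra hai
    exact absurd (Finset.mem_erase.mpr ⟨hai, ha⟩) (h ▸ Finset.notMem_empty a)
  exact hiQ (this ▸ hB)

lemma erase_blockOf_not_mem {i : Fin d} {S : Finset (Fin d)} {Q : Finset (Finset (Fin d))}
    (hQ : Q ∈ partsOf (insert i S)) (hiQ : ({i} : Finset (Fin d)) ∉ Q) :
    (blockOf i Q).erase i ∉ Q.erase (blockOf i Q) := by
  intro h
  obtain ⟨hne', hmem⟩ := Finset.mem_erase.mp h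
  obtain ⟨hB, hiB, -⟩ := blockOf_spec hQ
  have hdisj := (mem_partsOf.mp hQ).1 hmem hB hne'
  obtain ⟨a, ha⟩ := erase_blockOf_nonempty hQ hiQ
  exact Finset.disjoint_left.mp hdisj ha (Finset.mem_of_mem_erase ha)

lemma shrink_mem_partsOf {i : Fin d} {S : Finset (Fin d)} {Q : Finset (Finset (Fin d))}
    (hi : i ∉ S) (hQ : Q ∈ partsOf (insert i S)) (hiQ : ({i} : Finset (Fin d)) ∉ Q) :
    insert ((blockOf i Q).erase i) (Q.erase (blockOf i Q)) ∈ partsOf S := by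
  obtain ⟨hB, hiB, -⟩ := blockOf_spec hQ
  have hsup := sup_erase_blockOf hi hQ
  have hQ0 := hQ
  rw [mem_partsOf] at hQ ⊢
  obtain ⟨hdisj, hne, -⟩ := hQ
  refine ⟨?_, ?_, ?_⟩
  · rw [Finset.coe_insert]
    refine (hdisj.subset (Finset.coe_subset.mpr (Finset.erase_subset (blockOf i Q) Q) :
        (↑(Q.erase (blockOf i Q)) : Set (Finset (Fin d))) ⊆ (↑Q : Set _))).insert fun M' hM' _ => ?_
    obtain ⟨hne', hmem⟩ := Finset.mem_erase.mp (hM' : M' ∈ Q.erase (blockOf i Q))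
    simp only [id]
    exact Finset.disjoint_of_subset_left (Finset.erase_subset i _)
      (hdisj hB hmem fun h => hne' h.symm)
  · intro M hM
    rcases Finset.mem_insert.mp hM with h | h
    · exact h ▸ erase_blockOf_nonempty hQ0 hiQ
    · exact hne M (Finset.mem_erase.mp h).2
  · rw [Finset.sup_insert]
    simp only [id, Finset.sup_eq_union]
    exact hsup



lemma sum_partsOf_insert {i : Fin d} {S : Finset (Fin d)} (hi : i ∉ S)
    (f : Finset (Finset (Fin d)) → ℝ) :
    ∑ Q ∈ partsOf (insert i S), f Q
      = (∑ P ∈ partsOf S, f (insert {i} P))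
        + ∑ P ∈ partsOf S, ∑ M ∈ P, f (insert (insert i M) (P.erase M)) := by
  rw [← Finset.sum_filter_add_sum_filter_not (partsOf (insert i S))
    (fun Q => ({i} : Finset (Fin d)) ∈ Q)]
  congr 1
  · -- singleton side
    symm
    refine Finset.sum_bij' (i := fun P _ => insert ({i} : Finset (Fin d)) P)
      (j := fun Q _ => Q.erase {i}) ?_ ?_ ?_ ?_ ?_
    · intro P hP
      rw [Finset.mem_filter]
      exact ⟨insert_singleton_mem_partsOf hi hP, Finset.mem_insert_self _ _⟩
    · intro Q hQ
      obtain ⟨hQ, hiQ⟩ := Finset.mem_filter.mp hQ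
      exact erase_singleton_mem_partsOf hi hQ hiQ
    · intro P hP
      exact Finset.erase_insert (singleton_not_mem_parts hi hP)
    · intro Q hQ
      exact Finset.insert_erase (Finset.mem_filter.mp hQ).2
    · intro P hP; rfl
  · -- grow side
    rw [Finset.sum_sigma']
    symm
    refine Finset.sum_bij'
      (i := fun p _ => insert (insert i p.2) (p.1.erase p.2))
      (j := fun Q _ => ⟨insert ((blockOf i Q).erase i) (Q.erase (blockOf i Q)),
        (blockOf i Q).erase i⟩) ?_ ?_ ?_ ?_ ?_
    · rintro ⟨P, M⟩ hp
      obtain ⟨hP, hM⟩ := Finset.mem_sigma.mp hp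
      rw [Finset.mem_filter]
      refine ⟨grow_mem_partsOf hi hP hM, ?_⟩
      -- {i} ∉ insert (insert i M) (P.erase M)
      intro hmem
      rcases Finset.mem_insert.mp hmem with h | h
      · -- {i} = insert i M impossible since M nonempty with elements ≠ i
        obtain ⟨a, ha⟩ := (mem_partsOf.mp hP).2.1 M hM
        have hai : a ≠ i := fun he => hi (he ▸ block_subset hP hM ha)
        have : a ∈ ({i} : Finset (Fin d)) := h ▸ Finset.mem_insert_of_mem ha
        exact hai (Finset.mem_singleton.mp this)
      · exact singleton_not_mem_parts hi hP (Finset.mem_of_mem_erase h)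
    · intro Q hQ
      obtain ⟨hQ, hiQ⟩ := Finset.mem_filter.mp hQ
      rw [Finset.mem_sigma]
      exact ⟨shrink_mem_partsOf hi hQ hiQ, Finset.mem_insert_self _ _⟩
    · rintro ⟨P, M⟩ hp
      obtain ⟨hP, hM⟩ := Finset.mem_sigma.mp hp
      -- blockOf of the grown partition is insert i M
      set Q := insert (insert i M) (P.erase M) with hQdef
      have hQ : Q ∈ partsOf (insert i S) := grow_mem_partsOf hi hP hM
      have hblk : blockOf i Q = insert i M :=
        ((blockOf_spec hQ).2.2 (insert i M) (Finset.mem_insert_self _ _)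
          (Finset.mem_insert_self i M)).symm
      have hiM : i ∉ M := fun h => hi (block_subset hP hM h)
      have h1 : (blockOf i Q).erase i = M := by
        rw [hblk, Finset.erase_insert hiM]
      have hnotin : insert i M ∉ P.erase M := fun h =>
        hi (block_subset hP (Finset.mem_of_mem_erase h) (Finset.mem_insert_self i M))
      have h2 : Q.erase (blockOf i Q) = P.erase M := by
        rw [hblk, hQdef, Finset.erase_insert hnotin]
      show (⟨insert ((blockOf i Q).erase i) (Q.erase (blockOf i Q)), (blockOf i Q).erase i⟩ :
          Σ _ : Finset (Finset (Fin d)), Finset (Fin d)) = ⟨P, M⟩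
      rw [h1, h2, Finset.insert_erase hM]
    · intro Q hQ
      obtain ⟨hQ2, hiQ⟩ := Finset.mem_filter.mp hQ
      obtain ⟨hB, hiB, -⟩ := blockOf_spec hQ2
      have h1 : insert i ((blockOf i Q).erase i) = blockOf i Q :=
        Finset.insert_erase hiB
      have h2 : (insert ((blockOf i Q).erase i) (Q.erase (blockOf i Q))).erase
          ((blockOf i Q).erase i) = Q.erase (blockOf i Q) :=
        Finset.erase_insert (erase_blockOf_not_mem hQ2 hiQ)
      show insert (insert i ((blockOf i Q).erase i))
          ((insert ((blockOf i Q).erase i) (Q.erase (blockOf i Q))).erase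
            ((blockOf i Q).erase i)) = Q
      rw [h2, h1, Finset.insert_erase hB]
    · intro p hp; rfl

end Aux


section Main

variable {d : ℕ}

lemma mixedPartial_empty (f : (Fin d → ℝ) → ℝ) : mixedPartial ∅ f = f := by
  unfold mixedPartial
  rw [Finset.sort_empty]
  rfl

lemma mixedPartial_singleton (i : Fin d) (f : (Fin d → ℝ) → ℝ) :
    mixedPartial {i} f = coordPartial i f := by
  unfold mixedPartial
  rw [Finset.sort_singleton]
  rfl

lemma mixedPartial_insert {i : Fin d} {M : Finset (Fin d)} (hiM : i ∉ M)
    (hle : ∀ b ∈ M, i ≤ b) (f : (Fin d → ℝ) → ℝ) :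
    mixedPartial (insert i M) f = coordPartial i (mixedPartial M f) := by
  unfold mixedPartial
  have hs := Finset.sort_insert (r := (· ≤ ·)) hle hiM
  rw [hs]
  rfl

lemma cdf_comp_mem_Icc (x : Fin d → ℝ) :
    (fun l => stdNormalCdf (x l)) ∈ Set.Icc (0 : Fin d → ℝ) 1 := by
  constructor
  · intro l; exact (stdNormalCdf_mem_Icc (x l)).1
  · intro l; exact (stdNormalCdf_mem_Icc (x l)).2

lemma update_cdf_comp (x : Fin d → ℝ) (i : Fin d) (t : ℝ) :
    (fun l => stdNormalCdf (Function.update x i t l))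
      = Function.update (fun l => stdNormalCdf (x l)) i (stdNormalCdf t) := by
  funext l
  by_cases h : l = i
  · subst h; simp
  · simp [Function.update_of_ne h]

lemma hasDerivAt_comp_cdf {g : (Fin d → ℝ) → ℝ} {x : Fin d → ℝ} {i : Fin d}
    (hg : DifferentiableAt ℝ g (fun l => stdNormalCdf (x l))) :
    HasDerivAt (fun t => g (fun l => stdNormalCdf (Function.update x i t l)))
      (coordPartial i g (fun l => stdNormalCdf (x l)) * stdNormalPdf (x i)) (x i) := by
  have houter : HasDerivAt (fun s => g (Function.update (fun l => stdNormalCdf (x l)) i s))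
      (fderiv ℝ g (fun l => stdNormalCdf (x l)) (Pi.single i 1)) (stdNormalCdf (x i)) :=
    hasDerivAt_comp_update hg
  have hinner : HasDerivAt stdNormalCdf (stdNormalPdf (x i)) (x i) :=
    hasDerivAt_stdNormalCdf (x i)
  have hcomp : HasDerivAt
      ((fun s => g (Function.update (fun l => stdNormalCdf (x l)) i s)) ∘ stdNormalCdf)
      (fderiv ℝ g (fun l => stdNormalCdf (x l)) (Pi.single i 1) * stdNormalPdf (x i)) (x i) :=
    HasDerivAt.comp (x i) houter hinner
  have hfun : (fun t => g (fun l => stdNormalCdf (Function.update x i t l)))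
      = (fun s => g (Function.update (fun l => stdNormalCdf (x l)) i s)) ∘ stdNormalCdf := by
    funext t
    simp only [Function.comp_apply, update_cdf_comp]
  rw [hfun, coordPartial_eq_fderiv hg]
  exact hcomp

lemma mixedPartial_differentiableAt {U : Set (Fin d → ℝ)} (hU : IsOpen U)
    {C : (Fin d → ℝ) → ℝ} (hC : ContDiffOn ℝ d C U) {M : Finset (Fin d)}
    (hM : M.card < d) {u : Fin d → ℝ} (hu : u ∈ U) :
    DifferentiableAt ℝ (mixedPartial M C) u := by
  have h := foldr_coordPartial_contDiffOn hU (M.sort (· ≤ ·))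
    (by rw [Finset.length_sort]; omega) hC
  rw [Finset.length_sort] at h
  have h1 : (1 : WithTop ℕ∞) ≤ ((d - M.card : ℕ) : WithTop ℕ∞) := by
    exact_mod_cast Nat.one_le_iff_ne_zero.mpr (by omega)
  exact (h.differentiableOn (zero_lt_one.trans_le h1).ne').differentiableAt (hU.mem_nhds hu)

lemma parts_card_le {S : Finset (Fin d)} {P : Finset (Finset (Fin d))}
    (hP : P ∈ partsOf S) : P.card ≤ S.card := by
  obtain ⟨hdisj, hne, hsup⟩ := mem_partsOf.mp hP
  have hbi : S.card = ∑ M ∈ P, M.card := by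
    rw [← hsup, Finset.sup_eq_biUnion,
      Finset.card_biUnion (fun x hx y hy hxy => hdisj hx hy hxy)]
    rfl
  calc P.card = ∑ _M ∈ P, 1 := by simp
  _ ≤ ∑ M ∈ P, M.card := Finset.sum_le_sum fun M hM => Finset.card_pos.mpr (hne M hM)
  _ = S.card := hbi.symm

lemma master (n : ℕ) (C : (Fin d → ℝ) → ℝ) (U : Set (Fin d → ℝ))
    (hU : IsOpen U) (hUsub : Set.Icc (0 : Fin d → ℝ) 1 ⊆ U)
    (hC : ContDiffOn ℝ d C U) (k : ℕ) :
    ∀ S : Finset (Fin d), S.card = k → ∀ x : Fin d → ℝ,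
      mixedPartial S (fun v => C (fun l => stdNormalCdf (v l)) ^ n) x
        = (∏ l ∈ S, stdNormalPdf (x l)) *
          ∑ P ∈ partsOf S, (n.descFactorial P.card : ℝ) *
            C (fun l => stdNormalCdf (x l)) ^ (n - P.card) *
            ∏ M ∈ P, mixedPartial M C (fun l => stdNormalCdf (x l)) := by
  induction k with
  | zero =>
    intro S hS x
    rw [Finset.card_eq_zero] at hS
    subst hS
    rw [mixedPartial_empty]
    simp [partsOf_empty]
  | succ k ih =>
    intro S hS x
    have hSne : S.Nonempty := Finset.card_pos.mp (by omega)
    set i := S.min' hSne with hidef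
    have hiS : i ∈ S := S.min'_mem hSne
    set S₀ := S.erase i with hS0def
    have hiS₀ : i ∉ S₀ := Finset.notMem_erase i S
    have hins : insert i S₀ = S := Finset.insert_erase hiS
    have hcard : S₀.card = k := by rw [hS0def, Finset.card_erase_of_mem hiS]; omega
    have hle : ∀ b ∈ S₀, i ≤ b := fun b hb => S.min'_le b (Finset.mem_of_mem_erase hb)
    have hd0 : 0 < d := i.pos
    have hSled : S.card ≤ d := le_trans (Finset.card_le_univ S) (by simp)
    -- peel off the coordinate i
    have hmp : mixedPartial S (fun v => C (fun l => stdNormalCdf (v l)) ^ n)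
        = coordPartial i (mixedPartial S₀ (fun v => C (fun l => stdNormalCdf (v l)) ^ n)) := by
      rw [← hins]
      exact mixedPartial_insert hiS₀ hle _
    rw [hmp]
    unfold coordPartial
    have hIH : (fun t => mixedPartial S₀ (fun v => C (fun l => stdNormalCdf (v l)) ^ n)
        (Function.update x i t))
        = fun t => (∏ l ∈ S₀, stdNormalPdf (x l)) *
            ∑ P ∈ partsOf S₀, (n.descFactorial P.card : ℝ) *
              C (fun l => stdNormalCdf (Function.update x i t l)) ^ (n - P.card) *
              ∏ M ∈ P, mixedPartial M C (fun l => stdNormalCdf (Function.update x i t l)) := by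
      funext t
      rw [ih S₀ hcard (Function.update x i t)]
      congr 1
      exact Finset.prod_congr rfl fun l hl => by
        rw [Function.update_of_ne (ne_of_mem_of_not_mem hl hiS₀)]
    rw [hIH]
    have huU : (fun l => stdNormalCdf (x l)) ∈ U := hUsub (cdf_comp_mem_Icc x)
    have hCd : DifferentiableAt ℝ C (fun l => stdNormalCdf (x l)) := by
      have h := mixedPartial_differentiableAt hU hC
        (M := (∅ : Finset (Fin d))) (by simpa using hd0) huU
      rwa [mixedPartial_empty] at h
    have hgM : ∀ M : Finset (Fin d), M ⊆ S₀ →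
        DifferentiableAt ℝ (mixedPartial M C) (fun l => stdNormalCdf (x l)) := by
      intro M hM
      refine mixedPartial_differentiableAt hU hC ?_ huU
      have h1 : M.card ≤ S₀.card := Finset.card_le_card hM
      omega
    have hxx : Function.update x i (x i) = x := Function.update_eq_self i x
    -- derivative of each summand
    have hderiv : ∀ P ∈ partsOf S₀,
        HasDerivAt (fun t => (n.descFactorial P.card : ℝ) *
            C (fun l => stdNormalCdf (Function.update x i t l)) ^ (n - P.card) *
            ∏ M ∈ P, mixedPartial M C (fun l => stdNormalCdf (Function.update x i t l)))
          (stdNormalPdf (x i) *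
            ((n.descFactorial (P.card + 1) : ℝ) *
                C (fun l => stdNormalCdf (x l)) ^ (n - (P.card + 1)) *
                (mixedPartial {i} C (fun l => stdNormalCdf (x l)) *
                  ∏ M ∈ P, mixedPartial M C (fun l => stdNormalCdf (x l)))
             + ∑ M ∈ P, (n.descFactorial P.card : ℝ) *
                C (fun l => stdNormalCdf (x l)) ^ (n - P.card) *
                (mixedPartial (insert i M) C (fun l => stdNormalCdf (x l)) *
                  ∏ M' ∈ P.erase M, mixedPartial M' C (fun l => stdNormalCdf (x l)))))
          (x i) := by
      intro P hP
      have hA : HasDerivAt (fun t => C (fun l => stdNormalCdf (Function.update x i t l)))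
          (coordPartial i C (fun l => stdNormalCdf (x l)) * stdNormalPdf (x i)) (x i) :=
        hasDerivAt_comp_cdf hCd
      have hApow := hA.pow (n - P.card)
      simp only [hxx] at hApow
      simp only [Pi.pow_def] at hApow
      have hB : HasDerivAt
          (fun t => ∏ M ∈ P,
            mixedPartial M C (fun l => stdNormalCdf (Function.update x i t l)))
          (∑ M ∈ P, (∏ M' ∈ P.erase M, mixedPartial M' C (fun l => stdNormalCdf (x l))) •
            (coordPartial i (mixedPartial M C) (fun l => stdNormalCdf (x l)) *
              stdNormalPdf (x i))) (x i) := by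
        have h := HasDerivAt.finset_prod (u := P)
          (f := fun M t => mixedPartial M C (fun l => stdNormalCdf (Function.update x i t l)))
          (f' := fun M => coordPartial i (mixedPartial M C) (fun l => stdNormalCdf (x l)) *
            stdNormalPdf (x i))
          (fun M hM => hasDerivAt_comp_cdf (hgM M (block_subset hP hM)))
        simp only [hxx] at h
        simp only [Finset.prod_fn] at h
        exact h
      have hAB := (hApow.mul hB).const_mul ((n.descFactorial P.card : ℝ))
      simp only [hxx] at hAB
      have hfun : (fun t => (n.descFactorial P.card : ℝ) *
            C (fun l => stdNormalCdf (Function.update x i t l)) ^ (n - P.card) *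
            ∏ M ∈ P, mixedPartial M C (fun l => stdNormalCdf (Function.update x i t l)))
          = fun t => (n.descFactorial P.card : ℝ) *
              (C (fun l => stdNormalCdf (Function.update x i t l)) ^ (n - P.card) *
               ∏ M ∈ P, mixedPartial M C (fun l => stdNormalCdf (Function.update x i t l))) := by
        funext t; ring
      rw [hfun]
      convert hAB using 1
      · rfl
      · rfl
      · rfl
      -- value identity
      have hsum : ∑ M ∈ P, (∏ M' ∈ P.erase M,
            mixedPartial M' C (fun l => stdNormalCdf (x l))) •
            (coordPartial i (mixedPartial M C) (fun l => stdNormalCdf (x l)) *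
              stdNormalPdf (x i))
          = stdNormalPdf (x i) * ∑ M ∈ P,
              (mixedPartial (insert i M) C (fun l => stdNormalCdf (x l)) *
                ∏ M' ∈ P.erase M, mixedPartial M' C (fun l => stdNormalCdf (x l))) := by
        rw [Finset.mul_sum]
        refine Finset.sum_congr rfl fun M hM => ?_
        have hMS : M ⊆ S₀ := block_subset hP hM
        have hiM : i ∉ M := fun h => hiS₀ (hMS h)
        have hleM : ∀ b ∈ M, i ≤ b := fun b hb => hle b (hMS hb)
        rw [mixedPartial_insert hiM hleM, smul_eq_mul]
        ring
      rw [hsum, mixedPartial_singleton]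
      have hdf : (n.descFactorial (P.card + 1) : ℝ)
          = ((n - P.card : ℕ) : ℝ) * (n.descFactorial P.card : ℝ) := by
        rw [Nat.descFactorial_succ, Nat.cast_mul]
      rw [hdf]
      have hexp : n - P.card - 1 = n - (P.card + 1) := by omega
      rw [hexp]
      have hBm : ∑ M ∈ P, ((n.descFactorial P.card : ℝ) *
            C (fun l => stdNormalCdf (x l)) ^ (n - P.card) *
            (mixedPartial (insert i M) C (fun l => stdNormalCdf (x l)) *
              ∏ M' ∈ P.erase M, mixedPartial M' C (fun l => stdNormalCdf (x l))))
          = (n.descFactorial P.card : ℝ) * C (fun l => stdNormalCdf (x l)) ^ (n - P.card) *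
              ∑ M ∈ P, (mixedPartial (insert i M) C (fun l => stdNormalCdf (x l)) *
                ∏ M' ∈ P.erase M, mixedPartial M' C (fun l => stdNormalCdf (x l))) := by
        rw [Finset.mul_sum]
      rw [hBm]
      ring
    -- sum up
    have htotal := (HasDerivAt.sum hderiv).const_mul (∏ l ∈ S₀, stdNormalPdf (x l))
    simp only [Finset.sum_apply] at htotal
    rw [htotal.deriv]
    -- final combinatorial regrouping
    rw [← hins, Finset.prod_insert hiS₀,
      sum_partsOf_insert hiS₀ (fun Q => (n.descFactorial Q.card : ℝ) *
        C (fun l => stdNormalCdf (x l)) ^ (n - Q.card) *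
        ∏ M ∈ Q, mixedPartial M C (fun l => stdNormalCdf (x l)))]
    have hfins : ∑ P ∈ partsOf S₀, ((n.descFactorial (insert ({i} : Finset (Fin d)) P).card : ℝ) *
          C (fun l => stdNormalCdf (x l)) ^ (n - (insert ({i} : Finset (Fin d)) P).card) *
          ∏ M ∈ insert ({i} : Finset (Fin d)) P, mixedPartial M C (fun l => stdNormalCdf (x l)))
        = ∑ P ∈ partsOf S₀, ((n.descFactorial (P.card + 1) : ℝ) *
            C (fun l => stdNormalCdf (x l)) ^ (n - (P.card + 1)) *
            (mixedPartial {i} C (fun l => stdNormalCdf (x l)) *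
              ∏ M ∈ P, mixedPartial M C (fun l => stdNormalCdf (x l)))) := by
      refine Finset.sum_congr rfl fun P hP => ?_
      have hnm : ({i} : Finset (Fin d)) ∉ P := singleton_not_mem_parts hiS₀ hP
      rw [Finset.card_insert_of_notMem hnm, Finset.prod_insert hnm]
    have hfgrow : ∀ P ∈ partsOf S₀,
        ∑ M ∈ P, ((n.descFactorial (insert (insert i M) (P.erase M)).card : ℝ) *
          C (fun l => stdNormalCdf (x l)) ^ (n - (insert (insert i M) (P.erase M)).card) *
          ∏ M' ∈ insert (insert i M) (P.erase M),
            mixedPartial M' C (fun l => stdNormalCdf (x l)))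
        = ∑ M ∈ P, ((n.descFactorial P.card : ℝ) *
            C (fun l => stdNormalCdf (x l)) ^ (n - P.card) *
            (mixedPartial (insert i M) C (fun l => stdNormalCdf (x l)) *
              ∏ M' ∈ P.erase M, mixedPartial M' C (fun l => stdNormalCdf (x l)))) := by
      intro P hP
      refine Finset.sum_congr rfl fun M hM => ?_
      have hnm : insert i M ∉ P.erase M := fun h =>
        hiS₀ (block_subset hP (Finset.mem_of_mem_erase h) (Finset.mem_insert_self i M))
      have hPc : 1 ≤ P.card := Finset.card_pos.mpr ⟨M, hM⟩
      have hcardeq : (insert (insert i M) (P.erase M)).card = P.card := by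
        rw [Finset.card_insert_of_notMem hnm, Finset.card_erase_of_mem hM]
        omega
      rw [hcardeq, Finset.prod_insert hnm]
    rw [hfins, Finset.sum_congr rfl hfgrow]
    rw [← Finset.sum_add_distrib, ← Finset.mul_sum]
    ring

lemma filter_parts_card {j : ℕ} :
    (partsOf (Finset.univ : Finset (Fin d))).filter (fun P => P.card = j)
      = setPartitions (Finset.univ : Finset (Fin d)) j := by
  ext P
  simp only [partsOf, setPartitions, Finset.mem_filter, Finset.mem_univ, true_and]
  tauto

lemma sum_parts_to_Icc (hd : 1 ≤ d) (n : ℕ) (c : ℝ) (g : Finset (Fin d) → ℝ) :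
    ∑ P ∈ partsOf (Finset.univ : Finset (Fin d)),
        (n.descFactorial P.card : ℝ) * c ^ (n - P.card) * ∏ M ∈ P, g M
      = ∑ j ∈ Finset.Icc 1 (min d n),
          (n.factorial : ℝ) / ((n - j).factorial : ℝ) * c ^ (n - j) *
            ∑ P ∈ setPartitions (Finset.univ : Finset (Fin d)) j, ∏ M ∈ P, g M := by
  have hmaps : ∀ P ∈ partsOf (Finset.univ : Finset (Fin d)),
      P.card ∈ Finset.range (d + 1) := by
    intro P hP
    have h := parts_card_le hP
    simp only [Finset.card_univ, Fintype.card_fin] at h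
    exact Finset.mem_range.mpr (by omega)
  rw [← Finset.sum_fiberwise_of_maps_to hmaps]
  have hinner : ∀ j ∈ Finset.range (d + 1),
      ∑ P ∈ (partsOf (Finset.univ : Finset (Fin d))).filter (fun P => P.card = j),
          (n.descFactorial P.card : ℝ) * c ^ (n - P.card) * ∏ M ∈ P, g M
        = (n.descFactorial j : ℝ) * c ^ (n - j) *
            ∑ P ∈ setPartitions (Finset.univ : Finset (Fin d)) j, ∏ M ∈ P, g M := by
    intro j _
    rw [Finset.mul_sum, ← filter_parts_card]
    refine Finset.sum_congr rfl fun P hP => ?_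
    have hcard : P.card = j := (Finset.mem_filter.mp hP).2
    rw [hcard]
  rw [Finset.sum_congr rfl hinner]
  have hsub : Finset.Icc 1 (min d n) ⊆ Finset.range (d + 1) := by
    intro j hj
    rw [Finset.mem_Icc] at hj
    rw [Finset.mem_range]
    omega
  have hvan : ∀ j ∈ Finset.range (d + 1), j ∉ Finset.Icc 1 (min d n) →
      (n.descFactorial j : ℝ) * c ^ (n - j) *
        ∑ P ∈ setPartitions (Finset.univ : Finset (Fin d)) j, ∏ M ∈ P, g M = 0 := by
    intro j hj hnot
    rw [Finset.mem_range] at hj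
    rw [Finset.mem_Icc, not_and_or] at hnot
    rcases hnot with h0 | hbig
    · -- j = 0
      have hj0 : j = 0 := by omega
      subst hj0
      have hempty : setPartitions (Finset.univ : Finset (Fin d)) 0 = ∅ := by
        rw [Finset.eq_empty_iff_forall_notMem]
        intro P hP
        rw [← filter_parts_card, Finset.mem_filter] at hP
        obtain ⟨hP1, hP2⟩ := hP
        have hsup := (mem_partsOf.mp hP1).2.2
        rw [Finset.card_eq_zero] at hP2
        subst hP2
        simp only [Finset.sup_empty] at hsup
        have hne : (Finset.univ : Finset (Fin d)).Nonempty := by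
          have : Nonempty (Fin d) := ⟨⟨0, by omega⟩⟩
          exact Finset.univ_nonempty
        obtain ⟨a, ha⟩ := hne
        rw [← hsup] at ha
        exact absurd ha (Finset.notMem_empty _)
      rw [hempty]
      simp
    · have hgt : min d n < j := by omega
      rcases Nat.lt_or_ge n j with hn | hn
      · rw [Nat.descFactorial_eq_zero_iff_lt.mpr hn]
        simp
      · have hdj : d < j := by omega
        have hempty : setPartitions (Finset.univ : Finset (Fin d)) j = ∅ := by
          rw [Finset.eq_empty_iff_forall_notMem]
          intro P hP
          rw [← filter_parts_card, Finset.mem_filter] at hP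
          obtain ⟨hP1, hP2⟩ := hP
          have h := parts_card_le hP1
          simp only [Finset.card_univ, Fintype.card_fin] at h
          omega
        rw [hempty]
        simp
  rw [← Finset.sum_subset hsub hvan]
  refine Finset.sum_congr rfl fun j hj => ?_
  rw [Finset.mem_Icc] at hj
  have hjn : j ≤ n := le_trans hj.2 (min_le_right d n)
  have hcast : (n.descFactorial j : ℝ) = (n.factorial : ℝ) / ((n - j).factorial : ℝ) := by
    rw [Nat.descFactorial_eq_div hjn]
    rw [Nat.cast_div (Nat.factorial_dvd_factorial (Nat.sub_le n j))
      (Nat.cast_ne_zero.mpr (Nat.factorial_ne_zero _))]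
  rw [hcast]


end Main

/-- Corollary 1 of the paper: the `d`-fold mixed partial derivative
`∂^d/∂m₁⋯∂m_d` of `m ↦ C(Φ(m₁),…,Φ(m_d))^n` — the joint density of the componentwise
block-maxima on the marginally standard-normal scale — equals
`(∏ⱼ φ(mⱼ)) ∑_{j=1}^{d∧n} (n!/(n-j)!) C(Φ(m))^{n-j} ∑_{𝒫∈𝒮_{d,j}} ∏_{M∈𝒫} ∂_M C(Φ(m))`. -/
theorem blockMaxima_zscale_density (d n : ℕ) (hd : 1 ≤ d) (hn : 1 ≤ n)
    (C : (Fin d → ℝ) → ℝ)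
    (U : Set (Fin d → ℝ)) (hU : IsOpen U) (hUsub : Set.Icc (0 : Fin d → ℝ) 1 ⊆ U)
    (hC : ContDiffOn ℝ d C U)
    (m : Fin d → ℝ) :
    iterPartial d (fun v => C (fun i => stdNormalCdf (v i)) ^ n) m =
      (∏ j, stdNormalPdf (m j)) *
        ∑ j ∈ Finset.Icc 1 (min d n),
          (n.factorial : ℝ) / ((n - j).factorial : ℝ) *
            C (fun i => stdNormalCdf (m i)) ^ (n - j) *
            ∑ P ∈ setPartitions (Finset.univ : Finset (Fin d)) j,
              ∏ M ∈ P, mixedPartial M C (fun i => stdNormalCdf (m i)) := by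
  have h0 : iterPartial d (fun v => C (fun i => stdNormalCdf (v i)) ^ n) m
      = mixedPartial Finset.univ (fun v => C (fun i => stdNormalCdf (v i)) ^ n) m := by
    unfold iterPartial mixedPartial
    rw [Fin.sort_univ, List.take_of_length_le (by simp)]
  have hcardu : (Finset.univ : Finset (Fin d)).card = d := by simp
  have hmain := master n C U hU hUsub hC d Finset.univ hcardu m
  rw [h0, hmain]
  congr 1
  exact sum_parts_to_Icc hd n (C (fun i => stdNormalCdf (m i)))
    (fun M => mixedPartial M C (fun i => stdNormalCdf (m i)))

end
end

section
/- For all (u_1,u_2,u_3) with u_2 ∈ (0,1) and u_1,u_3 ∈ [0,1], the partial derivative of the three-dimensional vine copula C with respect to u_2 satisfies ∂C(u_1,u_2,u_3)/∂u_2 = C_{13;2}( C_{1|2}(u_1|u_2), C_{3|2}(u_3|u_2) ). -/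
noncomputable section

open MeasureTheory intervalIntegral Set

/-- The density of a bivariate copula: the mixed second partial derivative `∂²C/∂s∂t`. -/
def copDens (C : ℝ × ℝ → ℝ) (s t : ℝ) : ℝ :=
  deriv (fun a => deriv (fun b => C (a, b)) t) s

/-- The conditional distribution function `C_{1|2}(u₁|u₂) = ∂C₁₂(u₁,u₂)/∂u₂`. -/
def cond12 (C12 : ℝ × ℝ → ℝ) (u1 u2 : ℝ) : ℝ :=
  deriv (fun b => C12 (u1, b)) u2

/-- The conditional distribution function `C_{3|2}(u₃|u₂) = ∂C₂₃(u₂,u₃)/∂u₂`. -/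
def cond32 (C23 : ℝ × ℝ → ℝ) (u3 u2 : ℝ) : ℝ :=
  deriv (fun a => C23 (a, u3)) u2

/-- `∂₁C(x,y) = ∂C(x,y)/∂x`. -/
def pdFst (C : ℝ × ℝ → ℝ) (x y : ℝ) : ℝ := deriv (fun a => C (a, y)) x

/-- `∂₃C(x,y) = ∂C(x,y)/∂y` (derivative in the second argument). -/
def pdSnd (C : ℝ × ℝ → ℝ) (x y : ℝ) : ℝ := deriv (fun b => C (x, b)) y

/-- The three-dimensional vine copula built from the pair copulas `C₁₂, C₂₃, C₁₃;₂`: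
`C(u₁,u₂,u₃) = ∫₀^{u₁}∫₀^{u₂}∫₀^{u₃} c₁₂(v₁,v₂) c₂₃(v₂,v₃)
  c₁₃;₂(C_{1|2}(v₁|v₂), C_{3|2}(v₃|v₂)) dv₃ dv₂ dv₁`. -/
def vine (C12 C23 C132 : ℝ × ℝ → ℝ) (u1 u2 u3 : ℝ) : ℝ :=
  ∫ v1 in (0:ℝ)..u1, ∫ v2 in (0:ℝ)..u2, ∫ v3 in (0:ℝ)..u3,
    copDens C12 v1 v2 * copDens C23 v2 v3 *
      copDens C132 (cond12 C12 v1 v2) (cond32 C23 v3 v2)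

/-! ### Auxiliary lemmas -/

lemma hasDerivAt_fixFst {C : ℝ × ℝ → ℝ} {p : ℝ × ℝ} (h : DifferentiableAt ℝ C p) :
    HasDerivAt (fun b => C (p.1, b)) (fderiv ℝ C p (0, 1)) p.2 := by
  have h1 : HasDerivAt (fun b : ℝ => ((p.1 : ℝ), b)) ((0 : ℝ), (1 : ℝ)) p.2 :=
    (hasDerivAt_const _ _).prodMk (hasDerivAt_id _)
  exact h.hasFDerivAt.comp_hasDerivAt p.2 h1

lemma hasDerivAt_fixSnd {C : ℝ × ℝ → ℝ} {p : ℝ × ℝ} (h : DifferentiableAt ℝ C p) :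
    HasDerivAt (fun a => C (a, p.2)) (fderiv ℝ C p (1, 0)) p.1 := by
  have h1 : HasDerivAt (fun a : ℝ => ((a : ℝ), p.2)) ((1 : ℝ), (0 : ℝ)) p.1 :=
    (hasDerivAt_id _).prodMk (hasDerivAt_const _ _)
  exact h.hasFDerivAt.comp_hasDerivAt p.1 h1

lemma fderiv_clm_apply_const {A : ℝ × ℝ → (ℝ × ℝ →L[ℝ] ℝ)} {p : ℝ × ℝ}
    (hA : DifferentiableAt ℝ A p) (w v : ℝ × ℝ) :
    fderiv ℝ (fun q => A q w) p v = (fderiv ℝ A p v) w := by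
  rw [fderiv_clm_apply hA (differentiableAt_const w)]
  simp

section C2
variable {C : ℝ × ℝ → ℝ} {U : Set (ℝ × ℝ)}

lemma diffAt_of_mem (hU : IsOpen U) (hC : ContDiffOn ℝ 2 C U) {p : ℝ × ℝ} (hp : p ∈ U) :
    DifferentiableAt ℝ C p :=
  (hC.differentiableOn (by norm_num)).differentiableAt (hU.mem_nhds hp)

lemma fderiv_contDiffOn (hU : IsOpen U) (hC : ContDiffOn ℝ 2 C U) :
    ContDiffOn ℝ 1 (fderiv ℝ C) U :=
  hC.fderiv_of_isOpen hU (by norm_num)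

lemma fderiv_diffAt (hU : IsOpen U) (hC : ContDiffOn ℝ 2 C U) {p : ℝ × ℝ} (hp : p ∈ U) :
    DifferentiableAt ℝ (fderiv ℝ C) p :=
  (((fderiv_contDiffOn hU hC)).differentiableOn one_ne_zero).differentiableAt (hU.mem_nhds hp)

lemma pdSnd_eq (hU : IsOpen U) (hC : ContDiffOn ℝ 2 C U) {x y : ℝ} (hp : (x, y) ∈ U) :
    pdSnd C x y = fderiv ℝ C (x, y) (0, 1) :=
  (hasDerivAt_fixFst (diffAt_of_mem hU hC hp)).deriv

lemma pdFst_eq (hU : IsOpen U) (hC : ContDiffOn ℝ 2 C U) {x y : ℝ} (hp : (x, y) ∈ U) :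
    pdFst C x y = fderiv ℝ C (x, y) (1, 0) :=
  (hasDerivAt_fixSnd (diffAt_of_mem hU hC hp)).deriv

lemma hasDerivAt_pdSnd_fst (hU : IsOpen U) (hC : ContDiffOn ℝ 2 C U) {x y : ℝ}
    (hp : (x, y) ∈ U) :
    HasDerivAt (fun a => pdSnd C a y)
      (fderiv ℝ (fun q => fderiv ℝ C q (0, 1)) (x, y) (1, 0)) x := by
  set g : ℝ × ℝ → ℝ := fun q => fderiv ℝ C q (0, 1) with hg
  have hgd : DifferentiableAt ℝ g (x, y) :=
    (fderiv_diffAt hU hC hp).clm_apply (differentiableAt_const _)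
  have H : HasDerivAt (fun a => g (a, y)) (fderiv ℝ g (x, y) (1, 0)) x :=
    hasDerivAt_fixSnd hgd
  apply H.congr_of_eventuallyEq
  have hS : IsOpen {a : ℝ | (a, y) ∈ U} := hU.preimage (by fun_prop)
  filter_upwards [hS.mem_nhds hp] with a ha
  exact pdSnd_eq hU hC ha

lemma copDens_eq (hU : IsOpen U) (hC : ContDiffOn ℝ 2 C U) {x y : ℝ} (hp : (x, y) ∈ U) :
    copDens C x y = fderiv ℝ (fun q => fderiv ℝ C q (0, 1)) (x, y) (1, 0) :=
  (hasDerivAt_pdSnd_fst hU hC hp).deriv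

lemma hasDerivAt_pdSnd_fst' (hU : IsOpen U) (hC : ContDiffOn ℝ 2 C U) {x y : ℝ}
    (hp : (x, y) ∈ U) :
    HasDerivAt (fun a => pdSnd C a y) (copDens C x y) x := by
  rw [copDens_eq hU hC hp]; exact hasDerivAt_pdSnd_fst hU hC hp

/-- Clairaut: the derivative in `y` of `pdFst C x ·` is also the mixed density. -/
lemma hasDerivAt_pdFst_snd' (hU : IsOpen U) (hC : ContDiffOn ℝ 2 C U) {x y : ℝ}
    (hp : (x, y) ∈ U) :
    HasDerivAt (fun b => pdFst C x b) (copDens C x y) y := by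
  set g2 : ℝ × ℝ → ℝ := fun q => fderiv ℝ C q (1, 0) with hg2
  have hgd : DifferentiableAt ℝ g2 (x, y) :=
    (fderiv_diffAt hU hC hp).clm_apply (differentiableAt_const _)
  have H : HasDerivAt (fun b => g2 (x, b)) (fderiv ℝ g2 (x, y) (0, 1)) y :=
    hasDerivAt_fixFst hgd
  have hval : fderiv ℝ g2 (x, y) (0, 1) = copDens C x y := by
    rw [copDens_eq hU hC hp,
      fderiv_clm_apply_const (fderiv_diffAt hU hC hp) ((1:ℝ),(0:ℝ)) ((0:ℝ),(1:ℝ)),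
      fderiv_clm_apply_const (fderiv_diffAt hU hC hp) ((0:ℝ),(1:ℝ)) ((1:ℝ),(0:ℝ))]
    have hsymm := second_derivative_symmetric_of_eventually (f := C) (f' := fderiv ℝ C)
      (x := (x, y)) (f'' := fderiv ℝ (fderiv ℝ C) (x, y)) ?_ ?_ ((0:ℝ),(1:ℝ)) ((1:ℝ),(0:ℝ))
    · exact hsymm
    · filter_upwards [hU.mem_nhds hp] with q hq
      exact (diffAt_of_mem hU hC hq).hasFDerivAt
    · exact (fderiv_diffAt hU hC hp).hasFDerivAt
  rw [← hval]
  apply H.congr_of_eventuallyEq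
  have hS : IsOpen {b : ℝ | (x, b) ∈ U} := hU.preimage (by fun_prop)
  filter_upwards [hS.mem_nhds hp] with b hb
  exact pdFst_eq hU hC hb

lemma copDens_continuousOn (hU : IsOpen U) (hC : ContDiffOn ℝ 2 C U) :
    ContinuousOn (fun p : ℝ × ℝ => copDens C p.1 p.2) U := by
  have hg : ContDiffOn ℝ 1 (fun q => fderiv ℝ C q (0, 1)) U :=
    (fderiv_contDiffOn hU hC).clm_apply contDiffOn_const
  have h2 : ContinuousOn (fderiv ℝ (fun q => fderiv ℝ C q (0, 1))) U :=
    hg.continuousOn_fderiv_of_isOpen hU (le_refl 1)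
  have h3 : ContinuousOn (fun p : ℝ × ℝ =>
      fderiv ℝ (fun q => fderiv ℝ C q (0, 1)) p (1, 0)) U :=
    h2.clm_apply continuousOn_const
  exact h3.congr fun p hp => by
    simpa using copDens_eq hU hC (x := p.1) (y := p.2) (by simpa using hp)

lemma pdSnd_continuousOn (hU : IsOpen U) (hC : ContDiffOn ℝ 2 C U) :
    ContinuousOn (fun p : ℝ × ℝ => pdSnd C p.1 p.2) U := by
  have h2 : ContinuousOn (fderiv ℝ C) U :=
    hC.continuousOn_fderiv_of_isOpen hU (by norm_num)
  exact (h2.clm_apply continuousOn_const).congr fun p hp =>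
    pdSnd_eq hU hC (x := p.1) (y := p.2) (by simpa using hp)

lemma pdFst_continuousOn (hU : IsOpen U) (hC : ContDiffOn ℝ 2 C U) :
    ContinuousOn (fun p : ℝ × ℝ => pdFst C p.1 p.2) U := by
  have h2 : ContinuousOn (fderiv ℝ C) U :=
    hC.continuousOn_fderiv_of_isOpen hU (by norm_num)
  exact (h2.clm_apply continuousOn_const).congr fun p hp =>
    pdFst_eq hU hC (x := p.1) (y := p.2) (by simpa using hp)

end C2

lemma swapII {F : ℝ → ℝ → ℝ} (hF : Continuous (Function.uncurry F)) {a b : ℝ}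
    (ha : 0 ≤ a) (hb : 0 ≤ b) :
    ∫ x in (0:ℝ)..a, ∫ y in (0:ℝ)..b, F x y = ∫ y in (0:ℝ)..b, ∫ x in (0:ℝ)..a, F x y := by
  simp_rw [intervalIntegral.integral_of_le ha, intervalIntegral.integral_of_le hb]
  apply MeasureTheory.integral_integral_swap
  have h : IntegrableOn (Function.uncurry F) (Set.Ioc 0 a ×ˢ Set.Ioc 0 b) volume := by
    apply (hF.continuousOn.integrableOn_compact (isCompact_Icc.prod isCompact_Icc)).mono_set
    exact Set.prod_mono Set.Ioc_subset_Icc_self Set.Ioc_subset_Icc_self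
  rwa [IntegrableOn, MeasureTheory.Measure.volume_eq_prod ℝ ℝ,
    ← MeasureTheory.Measure.prod_restrict] at h

lemma deriv_zero_on_Icc {φ : ℝ → ℝ} {d y : ℝ} (hy : y ∈ Set.Icc (0:ℝ) 1)
    (hz : ∀ t ∈ Set.Icc (0:ℝ) 1, φ t = 0) (hd : HasDerivAt φ d y) : d = 0 := by
  have h1 : HasDerivWithinAt φ d (Set.Icc 0 1) y := hd.hasDerivWithinAt
  have h2 : HasDerivWithinAt φ 0 (Set.Icc 0 1) y :=
    (hasDerivWithinAt_const y _ (0:ℝ)).congr hz (hz y hy)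
  have hu : UniqueDiffWithinAt ℝ (Set.Icc (0:ℝ) 1) y := (uniqueDiffOn_Icc one_pos) y hy
  exact (h1.derivWithin hu).symm.trans (h2.derivWithin hu)

/-- ∂C(u₁,u₂,u₃)/∂u₂ = C₁₃;₂(C_{1|2}(u₁|u₂), C_{3|2}(u₃|u₂)). -/
theorem vine_partial_u2
    (C12 C23 C132 : ℝ × ℝ → ℝ)
    (U : Set (ℝ × ℝ)) (hU : IsOpen U)
    (hUsub : Set.Icc ((0 : ℝ), (0 : ℝ)) (1, 1) ⊆ U)
    (h12 : ContDiffOn ℝ 2 C12 U) (h23 : ContDiffOn ℝ 2 C23 U)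
    (h132 : ContDiffOn ℝ 2 C132 U)
    (hb12 : ∀ t ∈ Set.Icc (0:ℝ) 1, C12 (0, t) = 0 ∧ C12 (t, 0) = 0)
    (hb23 : ∀ t ∈ Set.Icc (0:ℝ) 1, C23 (0, t) = 0 ∧ C23 (t, 0) = 0)
    (hb132 : ∀ t ∈ Set.Icc (0:ℝ) 1, C132 (0, t) = 0 ∧ C132 (t, 0) = 0)
    (hr12 : ∀ u1 ∈ Set.Icc (0:ℝ) 1, ∀ u2 ∈ Set.Icc (0:ℝ) 1,
      cond12 C12 u1 u2 ∈ Set.Icc (0:ℝ) 1)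
    (hr32 : ∀ u3 ∈ Set.Icc (0:ℝ) 1, ∀ u2 ∈ Set.Icc (0:ℝ) 1,
      cond32 C23 u3 u2 ∈ Set.Icc (0:ℝ) 1)
    (u1 u2 u3 : ℝ) (hu1 : u1 ∈ Set.Icc (0:ℝ) 1) (hu2 : u2 ∈ Set.Ioo (0:ℝ) 1)
    (hu3 : u3 ∈ Set.Icc (0:ℝ) 1) :
    deriv (fun b => vine C12 C23 C132 u1 b u3) u2 =
      C132 (cond12 C12 u1 u2, cond32 C23 u3 u2) := by
  have hu2I : u2 ∈ Set.Icc (0:ℝ) 1 := ⟨hu2.1.le, hu2.2.le⟩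
  have hmemU : ∀ {x y : ℝ}, x ∈ Set.Icc (0:ℝ) 1 → y ∈ Set.Icc (0:ℝ) 1 → (x, y) ∈ U := by
    intro x y hx hy
    exact hUsub ⟨⟨hx.1, hy.1⟩, ⟨hx.2, hy.2⟩⟩
  have hsub1 : Set.Icc (0:ℝ) u1 ⊆ Set.Icc (0:ℝ) 1 := Set.Icc_subset_Icc le_rfl hu1.2
  have hsub3 : Set.Icc (0:ℝ) u3 ⊆ Set.Icc (0:ℝ) 1 := Set.Icc_subset_Icc le_rfl hu3.2
  -- the integrand as a function of a triple
  set f : ℝ × ℝ × ℝ → ℝ := fun w =>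
    copDens C12 w.1 w.2.1 * copDens C23 w.2.1 w.2.2 *
      copDens C132 (cond12 C12 w.1 w.2.1) (cond32 C23 w.2.2 w.2.1) with hf
  set K : Set (ℝ × ℝ × ℝ) := Set.Icc 0 1 ×ˢ Set.Icc 0 1 ×ˢ Set.Icc 0 1 with hK
  have hKc : IsClosed K := isClosed_Icc.prod (isClosed_Icc.prod isClosed_Icc)
  set W : Set (ℝ × ℝ × ℝ) :=
    ((fun w : ℝ × ℝ × ℝ => (w.1, w.2.1)) ⁻¹' U) ∩
      ((fun w : ℝ × ℝ × ℝ => (w.2.1, w.2.2)) ⁻¹' U) with hW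
  have hWo : IsOpen W := (hU.preimage (by fun_prop)).inter (hU.preimage (by fun_prop))
  have hcm : ContinuousOn (fun w : ℝ × ℝ × ℝ =>
      ((cond12 C12 w.1 w.2.1, cond32 C23 w.2.2 w.2.1) : ℝ × ℝ)) W := by
    apply ContinuousOn.prodMk
    · exact (pdSnd_continuousOn hU h12).comp
        (Continuous.continuousOn (by fun_prop : Continuous fun w : ℝ × ℝ × ℝ => (w.1, w.2.1)))
        fun w hw => hw.1
    · exact (pdFst_continuousOn hU h23).comp
        (Continuous.continuousOn (by fun_prop : Continuous fun w : ℝ × ℝ × ℝ => (w.2.1, w.2.2)))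
        fun w hw => hw.2
  set V : Set (ℝ × ℝ × ℝ) := W ∩ ((fun w : ℝ × ℝ × ℝ =>
      ((cond12 C12 w.1 w.2.1, cond32 C23 w.2.2 w.2.1) : ℝ × ℝ)) ⁻¹' U) with hV
  have hVo : IsOpen V := hcm.isOpen_inter_preimage hWo hU
  have hKV : K ⊆ V := by
    rintro ⟨w1, w2, w3⟩ ⟨hw1, hw2, hw3⟩
    exact ⟨⟨hmemU hw1 hw2, hmemU hw2 hw3⟩,
      hmemU (hr12 w1 hw1 w2 hw2) (hr32 w3 hw3 w2 hw2)⟩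
  have hfV : ContinuousOn f V := by
    apply ContinuousOn.mul
    · apply ContinuousOn.mul
      · exact (copDens_continuousOn hU h12).comp
          (Continuous.continuousOn (by fun_prop : Continuous fun w : ℝ × ℝ × ℝ => (w.1, w.2.1)))
          fun w hw => hw.1.1
      · exact (copDens_continuousOn hU h23).comp
          (Continuous.continuousOn (by fun_prop : Continuous fun w : ℝ × ℝ × ℝ => (w.2.1, w.2.2)))
          fun w hw => hw.1.2
    · exact (copDens_continuousOn hU h132).comp
        (hcm.mono Set.inter_subset_left) fun w hw => hw.2
  -- a global continuous extension of `f` from the cube `K`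
  obtain ⟨Fc, hFc⟩ := ContinuousMap.exists_restrict_eq (X := ℝ × ℝ × ℝ) (Y := ℝ) hKc
    ⟨K.restrict f, (hfV.mono hKV).restrict⟩
  have hFK : ∀ w ∈ K, Fc w = f w := fun w hw => ContinuousMap.congr_fun hFc ⟨w, hw⟩
  have hFcont : Continuous (⇑Fc) := Fc.continuous
  -- inner double integral of the extension, as a function of v2
  have hH : Continuous (fun p : ℝ × ℝ => ∫ v3 in (0:ℝ)..u3, Fc (p.1, p.2, v3)) := by
    apply continuous_parametric_intervalIntegral_of_continuous'
      (f := fun (p : ℝ × ℝ) (t : ℝ) => Fc (p.1, p.2, t))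
    exact hFcont.comp (by fun_prop)
  have hGc : Continuous (fun v2 : ℝ =>
      ∫ v1 in (0:ℝ)..u1, ∫ v3 in (0:ℝ)..u3, Fc (v1, v2, v3)) := by
    apply continuous_parametric_intervalIntegral_of_continuous'
      (f := fun (v2 v1 : ℝ) => ∫ v3 in (0:ℝ)..u3, Fc (v1, v2, v3))
    exact hH.comp (by fun_prop : Continuous fun p : ℝ × ℝ => (p.2, p.1))
  -- Step 1 : rewrite the vine with the `v2`-integral outermost
  have hvineEq : ∀ bb ∈ Set.Ioo (0:ℝ) 1, vine C12 C23 C132 u1 bb u3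
      = ∫ v2 in (0:ℝ)..bb, ∫ v1 in (0:ℝ)..u1, ∫ v3 in (0:ℝ)..u3, Fc (v1, v2, v3) := by
    intro bb hbb
    have h1 : vine C12 C23 C132 u1 bb u3
        = ∫ v1 in (0:ℝ)..u1, ∫ v2 in (0:ℝ)..bb, ∫ v3 in (0:ℝ)..u3, Fc (v1, v2, v3) := by
      apply intervalIntegral.integral_congr
      intro v1 hv1
      rw [Set.uIcc_of_le hu1.1] at hv1
      apply intervalIntegral.integral_congr
      intro v2 hv2
      rw [Set.uIcc_of_le hbb.1.le] at hv2
      apply intervalIntegral.integral_congr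
      intro v3 hv3
      rw [Set.uIcc_of_le hu3.1] at hv3
      exact (hFK (v1, v2, v3) ⟨hsub1 hv1,
        Set.Icc_subset_Icc le_rfl hbb.2.le hv2, hsub3 hv3⟩).symm
    rw [h1]
    exact swapII (F := fun v1 v2 => ∫ v3 in (0:ℝ)..u3, Fc (v1, v2, v3))
      (hH.comp (by fun_prop)) hu1.1 hbb.1.le
  have hstep1 : deriv (fun b => vine C12 C23 C132 u1 b u3) u2
      = ∫ v1 in (0:ℝ)..u1, ∫ v3 in (0:ℝ)..u3, Fc (v1, u2, v3) := by
    have hev : (fun b => vine C12 C23 C132 u1 b u3) =ᶠ[nhds u2]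
        fun b => ∫ v2 in (0:ℝ)..b,
          ∫ v1 in (0:ℝ)..u1, ∫ v3 in (0:ℝ)..u3, Fc (v1, v2, v3) := by
      filter_upwards [isOpen_Ioo.mem_nhds hu2] with bb hbb using hvineEq bb hbb
    rw [hev.deriv_eq]
    exact Continuous.deriv_integral _ hGc 0 u2
  rw [hstep1]
  -- Step 2 : evaluate the double integral at v2 = u2
  set A := cond12 C12 u1 u2 with hA
  have hAI : A ∈ Set.Icc (0:ℝ) 1 := hr12 u1 hu1 u2 hu2I
  -- boundary values
  have ha0 : cond12 C12 0 u2 = (0:ℝ) := by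
    have hev : (fun bb => C12 (0, bb)) =ᶠ[nhds u2] fun _ => (0:ℝ) := by
      filter_upwards [isOpen_Ioo.mem_nhds hu2] with bb hbb
      exact (hb12 bb ⟨hbb.1.le, hbb.2.le⟩).1
    show deriv (fun bb => C12 (0, bb)) u2 = 0
    rw [hev.deriv_eq, deriv_const]
  have hb0 : cond32 C23 0 u2 = (0:ℝ) := by
    have hev : (fun aa => C23 (aa, 0)) =ᶠ[nhds u2] fun _ => (0:ℝ) := by
      filter_upwards [isOpen_Ioo.mem_nhds hu2] with aa haa
      exact (hb23 aa ⟨haa.1.le, haa.2.le⟩).2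
    show deriv (fun aa => C23 (aa, 0)) u2 = 0
    rw [hev.deriv_eq, deriv_const]
  have h0I : (0:ℝ) ∈ Set.Icc (0:ℝ) 1 := ⟨le_rfl, zero_le_one⟩
  have hpd0 : ∀ y ∈ Set.Icc (0:ℝ) 1, pdSnd C132 0 y = 0 := by
    intro y hy
    have h0y : ((0:ℝ), y) ∈ U := hmemU h0I hy
    have hd : HasDerivAt (fun b => C132 (0, b)) (fderiv ℝ C132 (0, y) (0, 1)) y :=
      hasDerivAt_fixFst (diffAt_of_mem hU h132 h0y)
    have h0 : fderiv ℝ C132 (0, y) (0, 1) = 0 :=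
      deriv_zero_on_Icc hy (fun t ht => (hb132 t ht).1) hd
    rw [pdSnd_eq hU h132 h0y, h0]
  have hBmem : ∀ v3 ∈ Set.Icc (0:ℝ) 1, cond32 C23 v3 u2 ∈ Set.Icc (0:ℝ) 1 :=
    fun v3 hv3 => hr32 v3 hv3 u2 hu2I
  -- inner FTC (integral over v1)
  have hinner : ∀ v3 ∈ Set.Icc (0:ℝ) 1, (∫ v1 in (0:ℝ)..u1, f (v1, u2, v3))
      = copDens C23 u2 v3 * pdSnd C132 A (cond32 C23 v3 u2) := by
    intro v3 hv3
    have hB3I : cond32 C23 v3 u2 ∈ Set.Icc (0:ℝ) 1 := hBmem v3 hv3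
    have hFTC := intervalIntegral.integral_eq_sub_of_hasDerivAt
      (f := fun v1 => copDens C23 u2 v3 *
        pdSnd C132 (cond12 C12 v1 u2) (cond32 C23 v3 u2))
      (f' := fun v1 => f (v1, u2, v3)) (a := 0) (b := u1) ?_ ?_
    · rw [hFTC, ha0, hpd0 _ hB3I, mul_zero, sub_zero]
    · intro v1 hv1
      rw [Set.uIcc_of_le hu1.1] at hv1
      have hv1I : v1 ∈ Set.Icc (0:ℝ) 1 := hsub1 hv1
      have hA1 : HasDerivAt (fun v1 => cond12 C12 v1 u2) (copDens C12 v1 u2) v1 :=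
        hasDerivAt_pdSnd_fst' hU h12 (hmemU hv1I hu2I)
      have hP : HasDerivAt (fun x => pdSnd C132 x (cond32 C23 v3 u2))
          (copDens C132 (cond12 C12 v1 u2) (cond32 C23 v3 u2)) (cond12 C12 v1 u2) :=
        hasDerivAt_pdSnd_fst' hU h132 (hmemU (hr12 v1 hv1I u2 hu2I) hB3I)
      have hcomp := (hP.comp v1 hA1).const_mul (copDens C23 u2 v3)
      refine hcomp.congr_deriv ?_
      simp only [hf]
      ring
    · apply ContinuousOn.intervalIntegrable
      apply hfV.comp (Continuous.continuousOn (by fun_prop : Continuous fun v1 : ℝ => (v1, u2, v3)))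
      intro v1 hv1
      rw [Set.uIcc_of_le hu1.1] at hv1
      exact hKV ⟨hsub1 hv1, hu2I, hv3⟩
  -- outer FTC (integral over v3)
  have houter := intervalIntegral.integral_eq_sub_of_hasDerivAt
    (f := fun v3 => C132 (A, cond32 C23 v3 u2))
    (f' := fun v3 => copDens C23 u2 v3 * pdSnd C132 A (cond32 C23 v3 u2))
    (a := 0) (b := u3) ?_ ?_
  · -- assemble
    have hswap : (∫ v1 in (0:ℝ)..u1, ∫ v3 in (0:ℝ)..u3, Fc (v1, u2, v3))
        = ∫ v3 in (0:ℝ)..u3, ∫ v1 in (0:ℝ)..u1, Fc (v1, u2, v3) :=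
      swapII (F := fun v1 v3 => Fc (v1, u2, v3)) (hFcont.comp (by fun_prop)) hu1.1 hu3.1
    rw [hswap]
    have hcongr : (∫ v3 in (0:ℝ)..u3, ∫ v1 in (0:ℝ)..u1, Fc (v1, u2, v3))
        = ∫ v3 in (0:ℝ)..u3, copDens C23 u2 v3 * pdSnd C132 A (cond32 C23 v3 u2) := by
      apply intervalIntegral.integral_congr
      intro v3 hv3
      rw [Set.uIcc_of_le hu3.1] at hv3
      show (∫ v1 in (0:ℝ)..u1, Fc (v1, u2, v3))
          = copDens C23 u2 v3 * pdSnd C132 A (cond32 C23 v3 u2)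
      have h1 : (∫ v1 in (0:ℝ)..u1, Fc (v1, u2, v3))
          = ∫ v1 in (0:ℝ)..u1, f (v1, u2, v3) := by
        apply intervalIntegral.integral_congr
        intro v1 hv1
        rw [Set.uIcc_of_le hu1.1] at hv1
        exact hFK (v1, u2, v3) ⟨hsub1 hv1, hu2I, hsub3 hv3⟩
      rw [h1]
      exact hinner v3 (hsub3 hv3)
    rw [hcongr, houter, hb0]
    rw [(hb132 A hAI).2, sub_zero]
  · intro v3 hv3
    rw [Set.uIcc_of_le hu3.1] at hv3
    have hv3I : v3 ∈ Set.Icc (0:ℝ) 1 := hsub3 hv3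
    have hB : HasDerivAt (fun v3 => cond32 C23 v3 u2) (copDens C23 u2 v3) v3 :=
      hasDerivAt_pdFst_snd' hU h23 (hmemU hu2I hv3I)
    have hBU : (A, cond32 C23 v3 u2) ∈ U := hmemU hAI (hBmem v3 hv3I)
    have hC' : HasDerivAt (fun y => C132 (A, y)) (pdSnd C132 A (cond32 C23 v3 u2))
        (cond32 C23 v3 u2) := by
      have hd2 := hasDerivAt_fixFst (C := C132) (p := (A, cond32 C23 v3 u2))
        (diffAt_of_mem hU h132 hBU)
      rwa [← pdSnd_eq hU h132 hBU] at hd2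
    have := hC'.comp v3 hB
    refine this.congr_deriv ?_
    ring
  · apply ContinuousOn.intervalIntegrable
    apply ContinuousOn.mul
    · exact (copDens_continuousOn hU h23).comp
        (Continuous.continuousOn (by fun_prop : Continuous fun v3 : ℝ => (u2, v3)))
        fun v3 hv3 => hmemU hu2I (hsub3 (by rwa [Set.uIcc_of_le hu3.1] at hv3))
    · have hcont2 : ContinuousOn (fun x : ℝ => ((A, cond32 C23 x u2) : ℝ × ℝ))
          (Set.uIcc 0 u3) := by
        apply ContinuousOn.prodMk continuousOn_const
        exact (pdFst_continuousOn hU h23).comp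
          (Continuous.continuousOn (by fun_prop : Continuous fun v3 : ℝ => (u2, v3)))
          fun v3 hv3 => hmemU hu2I (hsub3 (by rwa [Set.uIcc_of_le hu3.1] at hv3))
      have hmaps2 : Set.MapsTo (fun x : ℝ => ((A, cond32 C23 x u2) : ℝ × ℝ))
          (Set.uIcc 0 u3) U := by
        intro v3 hv3
        rw [Set.uIcc_of_le hu3.1] at hv3
        exact hmemU hAI (hBmem v3 (hsub3 hv3))
      exact (pdSnd_continuousOn hU h132).comp hcont2 hmaps2

end
end
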